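/- Let K be a field and F ∈ K[[x]][y] monic of degree d, and let G = y^d · F(x, 1/y) be the reciprocal polynomial, which satisfies G(x,0) = 1. If d is invertible in K and N divides d, then there is a unique power series S ∈ K[[x]][[y]] with S(0) = 1 and G = S^N, and the N-th approximate root ψ of F is the reciprocal polynomial of the truncation of S to degree d/N in y. -/

import Mathlib

set_option maxRecDepth 8000

open Polynomial PowerSeries

namespace ApproxRootAux

variable {R : Type*} [CommRing R]

lemma eq_zero_of_forall_X_pow_dvd (f : PowerSeries R)
    (h : ∀ k, (PowerSeries.X : PowerSeries R) ^ k ∣ f) : f = 0 := by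
  ext n
  simpa using PowerSeries.X_pow_dvd_iff.mp (h (n + 1)) n (Nat.lt_succ_self n)

lemma X_pow_dvd_sub_of_pow {N : ℕ} (hN : IsUnit ((N : ℕ) : R)) {a b : PowerSeries R}
    (ha : PowerSeries.constantCoeff a = 1) (hb : PowerSeries.constantCoeff b = 1)
    {k : ℕ} (h : (PowerSeries.X : PowerSeries R) ^ k ∣ a ^ N - b ^ N) :
    (PowerSeries.X : PowerSeries R) ^ k ∣ a - b := by
  have hcu : IsUnit (∑ i ∈ Finset.range N, a ^ i * b ^ (N - 1 - i)) := by
    rw [PowerSeries.isUnit_iff_constantCoeff]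
    have hc : (PowerSeries.constantCoeff (R := R))
        (∑ i ∈ Finset.range N, a ^ i * b ^ (N - 1 - i)) = (N : R) := by
      simp [map_sum, map_mul, map_pow, ha, hb]
    rwa [hc]
  rw [← geom_sum₂_mul a b N] at h
  obtain ⟨v, hv⟩ := hcu
  have h2 : (PowerSeries.X : PowerSeries R) ^ k ∣
      (↑v⁻¹ : PowerSeries R) * ((↑v : PowerSeries R) * (a - b)) := by
    rw [hv]; exact Dvd.dvd.mul_left h _
  simpa [← mul_assoc] using h2

lemma root_unique {N : ℕ} (hN : IsUnit ((N : ℕ) : R)) {a b : PowerSeries R}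
    (ha : PowerSeries.constantCoeff a = 1) (hb : PowerSeries.constantCoeff b = 1)
    (h : a ^ N = b ^ N) : a = b := by
  have h0 : a - b = 0 :=
    eq_zero_of_forall_X_pow_dvd _ (fun k =>
      X_pow_dvd_sub_of_pow hN ha hb (by simp [h]))
  exact sub_eq_zero.mp h0

lemma add_pow_expand {A : Type*} [CommRing A] (a b : A) : ∀ M : ℕ,
    ∃ E : A, (a + b) ^ (M + 1) = a ^ (M + 1) + ((M : A) + 1) * a ^ M * b + b ^ 2 * E
  | 0 => ⟨0, by ring⟩
  | M + 1 => by
    obtain ⟨E, hE⟩ := add_pow_expand a b M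
    refine ⟨a * E + ((M : A) + 1) * a ^ M + b * E, ?_⟩
    have h1 : (a + b) ^ (M + 1 + 1) = (a + b) * (a + b) ^ (M + 1) := by ring
    rw [h1, hE]
    push_cast
    ring

noncomputable def approx (N : ℕ) (u : Rˣ) (g : PowerSeries R) : ℕ → PowerSeries R
  | 0 => 1
  | n + 1 =>
      approx N u g n +
        PowerSeries.C ((↑u⁻¹ : R) * ((PowerSeries.coeff (n + 1)) g -
          (PowerSeries.coeff (n + 1)) (approx N u g n ^ N))) * PowerSeries.X ^ (n + 1)

lemma constantCoeff_approx (N : ℕ) (u : Rˣ) (g : PowerSeries R) :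
    ∀ n, PowerSeries.constantCoeff (approx N u g n) = 1
  | 0 => map_one _
  | n + 1 => by
    have hx : PowerSeries.constantCoeff (PowerSeries.X ^ (n + 1) : PowerSeries R) = 0 := by
      rw [← PowerSeries.coeff_zero_eq_constantCoeff_apply, PowerSeries.coeff_X_pow,
        if_neg (Ne.symm (Nat.succ_ne_zero n))]
    rw [approx, map_add, constantCoeff_approx N u g n, map_mul, hx, mul_zero, add_zero]

lemma coeff_approx_stable (N : ℕ) (u : Rˣ) (g : PowerSeries R) {i n m : ℕ}
    (hin : i ≤ n) (hnm : n ≤ m) :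
    PowerSeries.coeff i (approx N u g m) = PowerSeries.coeff i (approx N u g n) := by
  induction m, hnm using Nat.le_induction with
  | base => rfl
  | succ m hm ih =>
    have hi : i ≠ m + 1 := by omega
    rw [approx, map_add, ih, PowerSeries.coeff_C_mul, PowerSeries.coeff_X_pow,
      if_neg hi, mul_zero, add_zero]

lemma coeff_approx_pow {N : ℕ} (hNpos : 0 < N) {u : Rˣ} (hu : (↑u : R) = (N : R))
    {g : PowerSeries R} (hg : PowerSeries.constantCoeff g = 1) :
    ∀ n, ∀ i ≤ n,
      PowerSeries.coeff i (approx N u g n ^ N) = PowerSeries.coeff i g := by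
  obtain ⟨M, rfl⟩ : ∃ M, N = M + 1 := ⟨N - 1, by omega⟩
  intro n
  induction n with
  | zero =>
    intro i hi
    have hi0 : i = 0 := Nat.le_zero.mp hi
    subst hi0
    have h1 : approx (M + 1) u g 0 = 1 := rfl
    rw [h1, one_pow, PowerSeries.coeff_zero_eq_constantCoeff_apply,
      PowerSeries.coeff_zero_eq_constantCoeff_apply, map_one, hg]
  | succ n ih =>
    intro i hi
    set a := approx (M + 1) u g n with ha
    set c : R := (↑u⁻¹ : R) * ((PowerSeries.coeff (n + 1)) g -
        (PowerSeries.coeff (n + 1)) (a ^ (M + 1))) with hc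
    set b : PowerSeries R := PowerSeries.C c * PowerSeries.X ^ (n + 1) with hb
    have happ : approx (M + 1) u g (n + 1) = a + b := by rw [approx]
    obtain ⟨E, hE⟩ := add_pow_expand a b M
    have hb2 : PowerSeries.coeff i (b ^ 2 * E) = 0 := by
      have hdvd : (PowerSeries.X : PowerSeries R) ^ (2 * (n + 1)) ∣ b ^ 2 * E :=
        ⟨PowerSeries.C c ^ 2 * E, by rw [hb]; ring⟩
      exact PowerSeries.X_pow_dvd_iff.mp hdvd i (by omega)
    have hlin : ((M : PowerSeries R) + 1) * a ^ M * b =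
        PowerSeries.X ^ (n + 1) *
          (((M : PowerSeries R) + 1) * PowerSeries.C c * a ^ M) := by
      rw [hb]; ring
    rw [happ, hE, map_add, map_add, hb2, add_zero, hlin]
    rcases Nat.lt_succ_iff_lt_or_eq.mp (Nat.lt_succ_of_le hi) with hlt | heq
    · have hi' : i ≤ n := Nat.lt_succ_iff.mp hlt
      have hz : PowerSeries.coeff i (PowerSeries.X ^ (n + 1) *
          (((M : PowerSeries R) + 1) * PowerSeries.C c * a ^ M)) = 0 := by
        apply PowerSeries.X_pow_dvd_iff.mp (dvd_mul_right _ _) i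
        omega
      rw [hz, add_zero, ih i hi']
    · subst heq
      have h2 : PowerSeries.coeff (n + 1) (PowerSeries.X ^ (n + 1) *
          (((M : PowerSeries R) + 1) * PowerSeries.C c * a ^ M)) = ((M : R) + 1) * c := by
        have h3 := PowerSeries.coeff_X_pow_mul
          (((M : PowerSeries R) + 1) * PowerSeries.C c * a ^ M) (n + 1) 0
        rw [zero_add] at h3
        have hca : PowerSeries.constantCoeff a = 1 := by
          rw [ha]; exact constantCoeff_approx _ _ _ _
        rw [h3, PowerSeries.coeff_zero_eq_constantCoeff_apply, map_mul, map_mul, map_pow,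
          hca, one_pow, mul_one, map_add, map_natCast, map_one,
          PowerSeries.constantCoeff_C]
      rw [h2, hc]
      have huu : ((M : R) + 1) * (↑u⁻¹ : R) = 1 := by
        have : ((M : R) + 1) = (↑u : R) := by rw [hu]; push_cast; ring
        rw [this, Units.mul_inv]
      rw [← mul_assoc, huu, one_mul]
      ring

noncomputable def nthRoot (N : ℕ) (u : Rˣ) (g : PowerSeries R) : PowerSeries R :=
  PowerSeries.mk fun n => PowerSeries.coeff n (approx N u g n)

lemma coeff_nthRoot (N : ℕ) (u : Rˣ) (g : PowerSeries R) {i n : ℕ} (hi : i ≤ n) :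
    PowerSeries.coeff i (nthRoot N u g) = PowerSeries.coeff i (approx N u g n) := by
  rw [nthRoot, PowerSeries.coeff_mk]
  exact (coeff_approx_stable N u g le_rfl hi).symm

lemma exists_root {N : ℕ} (hNpos : 0 < N) (hN : IsUnit ((N : ℕ) : R))
    (g : PowerSeries R) (hg : PowerSeries.constantCoeff g = 1) :
    ∃ S : PowerSeries R, PowerSeries.constantCoeff S = 1 ∧ S ^ N = g := by
  obtain ⟨u, hu⟩ := hN
  refine ⟨nthRoot N u g, ?_, ?_⟩
  · rw [← PowerSeries.coeff_zero_eq_constantCoeff_apply, coeff_nthRoot N u g (le_refl 0),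
      PowerSeries.coeff_zero_eq_constantCoeff_apply]
    exact constantCoeff_approx N u g 0
  · ext i
    have hstab : (PowerSeries.X : PowerSeries R) ^ (i + 1) ∣
        nthRoot N u g - approx N u g i := by
      rw [PowerSeries.X_pow_dvd_iff]
      intro m hm
      rw [map_sub, coeff_nthRoot N u g (Nat.lt_succ_iff.mp hm), sub_self]
    have hdvd : (PowerSeries.X : PowerSeries R) ^ (i + 1) ∣
        nthRoot N u g ^ N - approx N u g i ^ N :=
      dvd_trans hstab (sub_dvd_pow_sub_pow _ _ N)
    have h0 := PowerSeries.X_pow_dvd_iff.mp hdvd i (Nat.lt_succ_self i)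
    rw [map_sub, sub_eq_zero] at h0
    rw [h0, coeff_approx_pow hNpos hu hg i i le_rfl]

lemma reflect_pow (ψ : Polynomial R) {e : ℕ} (hψ : ψ.natDegree ≤ e) :
    ∀ k : ℕ, Polynomial.reflect (e * k) (ψ ^ k) = Polynomial.reflect e ψ ^ k := by
  intro k
  induction k with
  | zero =>
    ext n
    rw [pow_zero, pow_zero, mul_zero, Polynomial.coeff_reflect]
    rcases Nat.eq_zero_or_pos n with h | h
    · subst h
      rw [Polynomial.revAt_le (Nat.le_refl 0)]
    · rw [Polynomial.revAt_eq_self_of_lt h]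
  | succ k ih =>
    have h1 : ψ ^ (k + 1) = ψ ^ k * ψ := by ring
    have h2 : e * (k + 1) = e * k + e := by ring
    rw [h1, h2, Polynomial.reflect_mul _ _ (le_trans Polynomial.natDegree_pow_le
      (by nlinarith)) hψ, ih]
    ring

end ApproxRootAux

open ApproxRootAux

open Polynomial PowerSeries in
/-- For monic `F ∈ K[[x]][y]` of degree `d`, with `d` invertible in `K` and
`N ∣ d`, the reciprocal polynomial `G = y^d F(x, 1/y)` (which has constant coefficient `1`)
admits a unique `N`-th root `S ∈ K[[x]][[y]]` with constant term `1`, and the `N`-th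
approximate root `ψ` of `F` is the reciprocal polynomial (reflection in degree `d/N`)
of the truncation of `S` in degrees `≤ d / N`. -/
theorem approximate_root_via_power_series_root {K : Type*} [Field K]
    (F : Polynomial (PowerSeries K)) (d N : ℕ)
    (hF : F.Monic) (hdeg : F.natDegree = d) (hdpos : 0 < d)
    (hd : IsUnit (d : K)) (hN : N ∣ d) (hNpos : 0 < N) :
    (∃! S : PowerSeries (PowerSeries K),
        PowerSeries.constantCoeff (R := PowerSeries K) S = 1 ∧
        (F.reverse : PowerSeries (PowerSeries K)) = S ^ N) ∧
    (∀ S : PowerSeries (PowerSeries K),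
        PowerSeries.constantCoeff (R := PowerSeries K) S = 1 →
        (F.reverse : PowerSeries (PowerSeries K)) = S ^ N →
        ∀ ψ : Polynomial (PowerSeries K),
          ψ.Monic → ψ.natDegree = d / N →
          (F - ψ ^ N).degree < ((d - d / N : ℕ) : WithBot ℕ) →
          ψ = Polynomial.reflect (d / N) (PowerSeries.trunc (d / N + 1) S)) := by
  set A := PowerSeries K
  set e := d / N with he
  have heN : e * N = d := Nat.div_mul_cancel hN
  have heLd : e ≤ d := Nat.div_le_self _ _
  -- N is a unit in K, hence in A
  have hNK : IsUnit ((N : ℕ) : K) := by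
    obtain ⟨m, hm⟩ := hN
    rw [hm] at hd
    push_cast at hd
    exact isUnit_of_mul_isUnit_left hd
  have hNA : IsUnit ((N : ℕ) : A) := by
    rw [← map_natCast (PowerSeries.C (R := K))]
    exact hNK.map _
  -- constant coefficient of the reverse
  have hg : PowerSeries.constantCoeff (F.reverse : PowerSeries A) = 1 := by
    rw [← PowerSeries.coeff_zero_eq_constantCoeff_apply, Polynomial.coeff_coe,
      Polynomial.coeff_zero_reverse]
    exact hF
  obtain ⟨S₀, hS₀1, hS₀2⟩ := exists_root hNpos hNA (F.reverse : PowerSeries A) hg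
  constructor
  · refine ⟨S₀, ⟨hS₀1, hS₀2.symm⟩, ?_⟩
    rintro T ⟨hT1, hT2⟩
    exact root_unique hNA hT1 hS₀1 (by rw [← hT2, hS₀2])
  · intro S hS1 hS2 ψ hψmon hψdeg hψclose
    set P : Polynomial A := Polynomial.reflect e ψ with hP
    have hψe : ψ.natDegree ≤ e := le_of_eq hψdeg
    have hP0 : PowerSeries.constantCoeff (P : PowerSeries A) = 1 := by
      rw [← PowerSeries.coeff_zero_eq_constantCoeff_apply, Polynomial.coeff_coe, hP,
        Polynomial.coeff_reflect, Polynomial.revAt_le (Nat.zero_le e), Nat.sub_zero,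
        ← hψdeg]
      exact hψmon
    -- the reverse of F is reflect d F
    have hrev : F.reverse = Polynomial.reflect d F := by
      rw [Polynomial.reverse, hdeg]
    -- P^N = reflect d (ψ^N)
    have hPpow : Polynomial.reflect d (ψ ^ N) = P ^ N := by
      rw [← heN]
      exact reflect_pow ψ hψe N
    -- divisibility of the reflected remainder
    have hRdvd : (PowerSeries.X : PowerSeries A) ^ (e + 1) ∣
        ((Polynomial.reflect d (F - ψ ^ N) : Polynomial A) : PowerSeries A) := by
      rw [PowerSeries.X_pow_dvd_iff]
      intro m hm
      have hme : m ≤ e := Nat.lt_succ_iff.mp hm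
      rw [Polynomial.coeff_coe, Polynomial.coeff_reflect,
        Polynomial.revAt_le (le_trans hme heLd)]
      apply Polynomial.coeff_eq_zero_of_degree_lt
      exact lt_of_lt_of_le hψclose (Nat.cast_le.mpr (Nat.sub_le_sub_left hme d))
    have hkey : (PowerSeries.X : PowerSeries A) ^ (e + 1) ∣
        S ^ N - (P : PowerSeries A) ^ N := by
      have hcoe : S ^ N - (P : PowerSeries A) ^ N =
          ((Polynomial.reflect d (F - ψ ^ N) : Polynomial A) : PowerSeries A) := by
        rw [Polynomial.reflect_sub, hPpow, ← hrev, Polynomial.coe_sub, Polynomial.coe_pow,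
          hS2]
      rw [hcoe]
      exact hRdvd
    have hsub : (PowerSeries.X : PowerSeries A) ^ (e + 1) ∣ S - (P : PowerSeries A) :=
      X_pow_dvd_sub_of_pow hNA hS1 hP0 hkey
    have hcoeffs : ∀ m, m ≤ e → PowerSeries.coeff m S = P.coeff m := by
      intro m hm
      have := PowerSeries.X_pow_dvd_iff.mp hsub m (Nat.lt_succ_of_le hm)
      rw [map_sub, sub_eq_zero] at this
      rw [this, Polynomial.coeff_coe]
    have htr : PowerSeries.trunc (e + 1) S = P := by
      apply Polynomial.ext
      intro n
      rw [PowerSeries.coeff_trunc]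
      split_ifs with hn
      · exact hcoeffs n (Nat.lt_succ_iff.mp hn)
      · push_neg at hn
        have hne : e < n := by omega
        rw [hP, Polynomial.coeff_reflect, Polynomial.revAt_eq_self_of_lt hne]
        exact (Polynomial.coeff_eq_zero_of_natDegree_lt (lt_of_le_of_lt hψe hne)).symm
    rw [htr, hP]
    apply Polynomial.ext
    intro n
    rw [Polynomial.coeff_reflect, Polynomial.coeff_reflect, Polynomial.revAt_invol]
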